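/- Let Γ ⊆ Sym({1,…,n}) be a permutation group, let d be odd, let v ∈ S_d(Γ) be irreducible, and let τ ∈ O(ℝ^d) with det τ = −1. Then v and the mirror arrangement τv = (τv_1,…,τv_n) are deformation equivalent if and only if v is flexible. -/

import Mathlib

open Matrix

/-- The matrix of an arrangement of `n` points in `ℝ^d`: the `i`-th row is the point `v i`. -/
def arrMat {n d : ℕ} (v : Fin n → Fin d → ℝ) : Matrix (Fin n) (Fin d) ℝ := Matrix.of v

/-- An arrangement is normalized if `MᵀM` is the identity matrix. -/
def IsNormalized {n d : ℕ} (v : Fin n → Fin d → ℝ) : Prop :=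
  (arrMat v)ᵀ * arrMat v = 1

/-- The arrangement space of `v`: the column span of its matrix, a subspace of `ℝ^n`. -/
def arrSpace {n d : ℕ} (v : Fin n → Fin d → ℝ) : Submodule ℝ (Fin n → ℝ) :=
  Submodule.span ℝ (Set.range (arrMat v)ᵀ)

/-- `detPair v w = det (M_wᵀ * M_v)`, i.e. `det(v, w̄) = det(M̄ᵀ M)` with `w` playing `v̄`. -/
noncomputable def detPair {n d : ℕ} (v w : Fin n → Fin d → ℝ) : ℝ :=
  ((arrMat w)ᵀ * arrMat v).det

/-- Two subspaces `U, W ⊆ ℝ^n` are orthogonal if `⟨u, w⟩ = 0` for all `u ∈ U`, `w ∈ W`. -/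
def OrthSpaces {n : ℕ} (U W : Submodule ℝ (Fin n → ℝ)) : Prop :=
  ∀ u ∈ U, ∀ w ∈ W, u ⬝ᵥ w = 0

/-- Arrangements are equivalent if related by an invertible linear map `X`. -/
def AreEquivalent {n d : ℕ} (v w : Fin n → Fin d → ℝ) : Prop :=
  ∃ X : Matrix (Fin d) (Fin d) ℝ, X.det ≠ 0 ∧ ∀ i, X.mulVec (v i) = w i

/-- Arrangements are positively equivalent if related by a linear map of positive determinant. -/
def PosEquivalent {n d : ℕ} (v w : Fin n → Fin d → ℝ) : Prop :=
  ∃ X : Matrix (Fin d) (Fin d) ℝ, 0 < X.det ∧ ∀ i, X.mulVec (v i) = w i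

/-- `T : Γ → O(ℝ^d)` is a representation: orthogonal values and multiplicative. -/
def IsRep {n d : ℕ} (Γ : Subgroup (Equiv.Perm (Fin n)))
    (T : Γ → Matrix (Fin d) (Fin d) ℝ) : Prop :=
  (∀ φ, (T φ)ᵀ * T φ = 1) ∧ (∀ φ ψ, T (φ * ψ) = T φ * T ψ)

/-- `T` is a representation of the arrangement `v`: `T_φ v_i = v_{φ(i)}`. -/
def IsRepOf {n d : ℕ} (Γ : Subgroup (Equiv.Perm (Fin n)))
    (T : Γ → Matrix (Fin d) (Fin d) ℝ) (v : Fin n → Fin d → ℝ) : Prop :=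
  IsRep Γ T ∧ ∀ (φ : Γ) (i : Fin n), (T φ).mulVec (v i) = v (φ.val i)

/-- `v` is a `Γ`-arrangement if it has a representation. -/
def IsGammaArr {n d : ℕ} (Γ : Subgroup (Equiv.Perm (Fin n)))
    (v : Fin n → Fin d → ℝ) : Prop :=
  ∃ T : Γ → Matrix (Fin d) (Fin d) ℝ, IsRepOf Γ T v

/-- A representation is irreducible if the only invariant subspaces of `ℝ^d` are `⊥` and `⊤`. -/
def IrredRep {n d : ℕ} (Γ : Subgroup (Equiv.Perm (Fin n)))
    (T : Γ → Matrix (Fin d) (Fin d) ℝ) : Prop :=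
  ∀ W : Submodule ℝ (Fin d → ℝ), (∀ (φ : Γ), ∀ x ∈ W, (T φ).mulVec x ∈ W) → W = ⊥ ∨ W = ⊤

/-- Representations are isomorphic: an invertible equivariant map exists. -/
def IsoReps {n d : ℕ} (Γ : Subgroup (Equiv.Perm (Fin n)))
    (T T' : Γ → Matrix (Fin d) (Fin d) ℝ) : Prop :=
  ∃ R : Matrix (Fin d) (Fin d) ℝ, R.det ≠ 0 ∧ ∀ φ, R * T φ = T' φ * R

/-- Representations are positively isomorphic: an equivariant map with positive determinant. -/
def PosIsoReps {n d : ℕ} (Γ : Subgroup (Equiv.Perm (Fin n)))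
    (T T' : Γ → Matrix (Fin d) (Fin d) ℝ) : Prop :=
  ∃ R : Matrix (Fin d) (Fin d) ℝ, 0 < R.det ∧ ∀ φ, R * T φ = T' φ * R

/-- `S_d(Γ)`: the set of normalized `Γ`-arrangements of `n` points in `ℝ^d`. -/
def SdSet (n d : ℕ) (Γ : Subgroup (Equiv.Perm (Fin n))) : Set (Fin n → Fin d → ℝ) :=
  {v | IsNormalized v ∧ IsGammaArr Γ v}

/-- Deformation equivalence: a continuous path in `S_d(Γ)` from `v` to `w`. -/
def DeformEquiv {n d : ℕ} (Γ : Subgroup (Equiv.Perm (Fin n)))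
    (v w : Fin n → Fin d → ℝ) : Prop :=
  ∃ c : ℝ → (Fin n → Fin d → ℝ), ContinuousOn c (Set.Icc 0 1) ∧
    (∀ t ∈ Set.Icc (0:ℝ) 1, c t ∈ SdSet n d Γ) ∧ c 0 = v ∧ c 1 = w

/-- `v` is flexible if it can be deformed into some non-equivalent arrangement. -/
def Flexible {n d : ℕ} (Γ : Subgroup (Equiv.Perm (Fin n))) (v : Fin n → Fin d → ℝ) : Prop :=
  ∃ w : Fin n → Fin d → ℝ, DeformEquiv Γ v w ∧ ¬ AreEquivalent v w

/-- A subspace `W ⊆ ℝ^n` is `Γ`-invariant (under the permutation action). -/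
def GammaInvariant {n : ℕ} (Γ : Subgroup (Equiv.Perm (Fin n)))
    (W : Submodule ℝ (Fin n → ℝ)) : Prop :=
  ∀ (φ : Γ), ∀ x ∈ W, (fun i => x (φ.val⁻¹ i)) ∈ W

section Stmt14Aux

open Matrix Set

variable {n d : ℕ} {Γ : Subgroup (Equiv.Perm (Fin n))}

lemma arrMat_apply (a : Fin n → Fin d → ℝ) (i : Fin n) (k : Fin d) :
    arrMat a i k = a i k := rfl

lemma gram_apply (a b : Fin n → Fin d → ℝ) (k l : Fin d) :
    ((arrMat a)ᵀ * arrMat b) k l = ∑ i, a i k * b i l := by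
  simp [Matrix.mul_apply, arrMat, Matrix.transpose_apply]

lemma arrMat_mulVec (X : Matrix (Fin d) (Fin d) ℝ) (a : Fin n → Fin d → ℝ) :
    arrMat (fun i => X *ᵥ a i) = arrMat a * Xᵀ := by
  ext i l
  simp [arrMat, Matrix.mul_apply, Matrix.mulVec, dotProduct, mul_comm]

lemma arrMat_smul (c : ℝ) (a : Fin n → Fin d → ℝ) :
    arrMat (fun i => c • a i) = c • arrMat a := by
  ext i k; simp [arrMat]

lemma isRep_one {T : Γ → Matrix (Fin d) (Fin d) ℝ} (h : IsRep Γ T) : T 1 = 1 := by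
  have h1 := h.2 1 1
  rw [one_mul] at h1
  calc T 1 = ((T 1)ᵀ * T 1) * T 1 := by rw [h.1 1, Matrix.one_mul]
  _ = (T 1)ᵀ * (T 1 * T 1) := by rw [Matrix.mul_assoc]
  _ = (T 1)ᵀ * T 1 := by rw [← h1]
  _ = 1 := h.1 1

lemma isRep_mul_transpose {T : Γ → Matrix (Fin d) (Fin d) ℝ} (h : IsRep Γ T) (φ : Γ) :
    T φ * (T φ)ᵀ = 1 :=
  mul_eq_one_comm.mp (h.1 φ)

lemma isRep_inv_eq {T : Γ → Matrix (Fin d) (Fin d) ℝ} (h : IsRep Γ T) (φ : Γ) :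
    T φ⁻¹ = (T φ)ᵀ := by
  have h0 : T φ⁻¹ * T φ = 1 := by
    rw [← h.2 φ⁻¹ φ, inv_mul_cancel]; exact isRep_one h
  calc T φ⁻¹ = T φ⁻¹ * (T φ * (T φ)ᵀ) := by rw [isRep_mul_transpose h, Matrix.mul_one]
  _ = (T φ⁻¹ * T φ) * (T φ)ᵀ := by rw [Matrix.mul_assoc]
  _ = (T φ)ᵀ := by rw [h0, Matrix.one_mul]

end Stmt14Aux
section Stmt14Aux2

open Matrix Set

variable {n d : ℕ} {Γ : Subgroup (Equiv.Perm (Fin n))}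

lemma intertwine {T T' : Γ → Matrix (Fin d) (Fin d) ℝ} (hT : IsRep Γ T) (hT' : IsRep Γ T')
    {a b : Fin n → Fin d → ℝ}
    (ha : ∀ (φ : Γ) (i : Fin n), (T φ) *ᵥ a i = a (φ.val i))
    (hb : ∀ (φ : Γ) (i : Fin n), (T' φ) *ᵥ b i = b (φ.val i)) (φ : Γ) :
    T φ * ((arrMat a)ᵀ * arrMat b) = ((arrMat a)ᵀ * arrMat b) * T' φ := by
  ext k l
  have lhs : (T φ * ((arrMat a)ᵀ * arrMat b)) k l = ∑ i, a (φ.val i) k * b i l := by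
    calc (T φ * ((arrMat a)ᵀ * arrMat b)) k l
        = ∑ m, ∑ i, T φ k m * (a i m * b i l) := by
          simp [Matrix.mul_apply, gram_apply, Finset.mul_sum, arrMat_apply]
      _ = ∑ i, ∑ m, T φ k m * (a i m * b i l) := Finset.sum_comm
      _ = ∑ i, (∑ m, T φ k m * a i m) * b i l := by
          refine Finset.sum_congr rfl fun i _ => ?_
          rw [Finset.sum_mul]
          exact Finset.sum_congr rfl fun m _ => by ring
      _ = ∑ i, (T φ *ᵥ a i) k * b i l := by
          simp [Matrix.mulVec, dotProduct]
      _ = ∑ i, a (φ.val i) k * b i l := by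
          refine Finset.sum_congr rfl fun i _ => ?_
          rw [ha φ i]
  have rhs : (((arrMat a)ᵀ * arrMat b) * T' φ) k l = ∑ i, a i k * b ((φ⁻¹ : Γ).val i) l := by
    calc (((arrMat a)ᵀ * arrMat b) * T' φ) k l
        = ∑ m, ∑ i, a i k * b i m * T' φ m l := by
          simp [Matrix.mul_apply, _root_.gram_apply, Finset.sum_mul, arrMat_apply]
      _ = ∑ i, ∑ m, a i k * b i m * T' φ m l := Finset.sum_comm
      _ = ∑ i, a i k * ((T' φ⁻¹) *ᵥ b i) l := by
          refine Finset.sum_congr rfl fun i _ => ?_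
          rw [isRep_inv_eq hT' φ]
          simp only [Matrix.mulVec, dotProduct, Matrix.transpose_apply, Finset.mul_sum]
          exact Finset.sum_congr rfl fun m _ => by ring
      _ = ∑ i, a i k * b ((φ⁻¹ : Γ).val i) l := by
          refine Finset.sum_congr rfl fun i _ => ?_
          rw [hb φ⁻¹ i]
  rw [lhs, rhs]
  have hcoe : ((φ⁻¹ : Γ).val : Equiv.Perm (Fin n)) = (φ.val)⁻¹ := rfl
  rw [hcoe]
  exact Fintype.sum_equiv φ.val _ _ (fun i => by simp)

end Stmt14Aux2
section Stmt14Aux3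

open Matrix Set

variable {n d : ℕ} {Γ : Subgroup (Equiv.Perm (Fin n))}

lemma comm_symm_scalar {T : Γ → Matrix (Fin d) (Fin d) ℝ}
    (hTirr : IrredRep Γ T) {B : Matrix (Fin d) (Fin d) ℝ}
    (hsymm : Bᵀ = B) (hcomm : ∀ φ, T φ * B = B * T φ) (hB : B ≠ 0) :
    ∃ t : ℝ, t ≠ 0 ∧ B = t • (1 : Matrix (Fin d) (Fin d) ℝ) := by
  have hherm : B.IsHermitian := by
    rw [Matrix.IsHermitian, Matrix.conjTranspose_eq_transpose_of_trivial, hsymm]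
  obtain ⟨x, t, ht, hx, hev⟩ := hherm.exists_eigenvector_of_ne_zero hB
  set W : Submodule ℝ (Fin d → ℝ) := LinearMap.ker (B.mulVecLin - t • LinearMap.id) with hW
  have hmemW : ∀ z, z ∈ W ↔ B *ᵥ z = t • z := fun z => by
    simp [hW, LinearMap.mem_ker, LinearMap.sub_apply, Matrix.mulVecLin_apply, sub_eq_zero]
  have hWinv : ∀ (φ : Γ), ∀ z ∈ W, (T φ) *ᵥ z ∈ W := by
    intro φ z hz
    rw [hmemW] at hz ⊢
    rw [Matrix.mulVec_mulVec, ← hcomm φ, ← Matrix.mulVec_mulVec, hz, Matrix.mulVec_smul]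
  rcases hTirr W hWinv with hbot | htop
  · exfalso
    apply hx
    have hxW : x ∈ W := (hmemW x).2 hev
    rw [hbot] at hxW
    simpa using hxW
  · refine ⟨t, ht, ?_⟩
    ext k l
    have hl : (Pi.single l 1 : Fin d → ℝ) ∈ W := htop ▸ Submodule.mem_top
    rw [hmemW] at hl
    have h2 := congrFun hl k
    simp only [Matrix.mulVec_single_one, Matrix.col_apply] at h2
    rw [h2]
    simp [Matrix.one_apply, Pi.single_apply, eq_comm]

lemma comm_transpose {T : Γ → Matrix (Fin d) (Fin d) ℝ} (hrep : IsRep Γ T)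
    {A : Matrix (Fin d) (Fin d) ℝ} (hcomm : ∀ φ, T φ * A = A * T φ) (φ : Γ) :
    T φ * Aᵀ = Aᵀ * T φ := by
  have h1 := hcomm φ⁻¹
  have h2 := congrArg Matrix.transpose h1
  rw [Matrix.transpose_mul, Matrix.transpose_mul] at h2
  have h3 : (T φ⁻¹)ᵀ = T φ := by rw [isRep_inv_eq hrep, Matrix.transpose_transpose]
  rw [h3] at h2
  exact h2.symm

end Stmt14Aux3
section Stmt14Aux4

open Matrix Set

variable {n d : ℕ} {Γ : Subgroup (Equiv.Perm (Fin n))}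

lemma exists_flex {v : Fin n → Fin d → ℝ} (hv : v ∈ SdSet n d Γ)
    {T : Γ → Matrix (Fin d) (Fin d) ℝ} (hT : IsRepOf Γ T v) (hTirr : IrredRep Γ T)
    {v₁ : Fin n → Fin d → ℝ} (hv₁ : v₁ ∈ SdSet n d Γ) (hne : ¬ AreEquivalent v v₁)
    (hdet : ((arrMat v)ᵀ * arrMat v₁).det ≠ 0) :
    ∃ w' : Fin n → Fin d → ℝ, (∀ (φ : Γ) (i : Fin n), (T φ) *ᵥ w' i = w' (φ.val i)) ∧
      (arrMat w')ᵀ * arrMat w' = 1 ∧ (arrMat v)ᵀ * arrMat w' = 0 := by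
  obtain ⟨T1, hT1⟩ := hv₁.2
  have hvn : (arrMat v)ᵀ * arrMat v = 1 := hv.1
  have hv₁n : (arrMat v₁)ᵀ * arrMat v₁ = 1 := hv₁.1
  set S : Matrix (Fin d) (Fin d) ℝ := (arrMat v)ᵀ * arrMat v₁ with hS
  have hinter : ∀ φ : Γ, T φ * S = S * T1 φ := intertwine hT.1 hT1.1 hT.2 hT1.2
  set u : Fin n → Fin d → ℝ := fun i => S *ᵥ v₁ i with hu
  have hequ : ∀ (φ : Γ) (i : Fin n), (T φ) *ᵥ u i = u (φ.val i) := by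
    intro φ i
    rw [hu]
    simp only
    rw [Matrix.mulVec_mulVec, hinter φ, ← Matrix.mulVec_mulVec, hT1.2 φ i]
  set A : Matrix (Fin d) (Fin d) ℝ := (arrMat v)ᵀ * arrMat u with hA
  have hcommA : ∀ φ : Γ, T φ * A = A * T φ := intertwine hT.1 hT.1 hT.2 hequ
  have hcommAT : ∀ φ : Γ, T φ * Aᵀ = Aᵀ * T φ := comm_transpose hT.1 hcommA
  set u' : Fin n → Fin d → ℝ := fun i => u i - Aᵀ *ᵥ v i with hu'
  have hequ' : ∀ (φ : Γ) (i : Fin n), (T φ) *ᵥ u' i = u' (φ.val i) := by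
    intro φ i
    rw [hu']
    simp only
    rw [Matrix.mulVec_sub, hequ φ i, Matrix.mulVec_mulVec, hcommAT φ, ← Matrix.mulVec_mulVec,
      hT.2 φ i]
  have harr : arrMat u' = arrMat u - arrMat v * A := by
    ext i l
    simp [hu', arrMat_apply, Matrix.sub_apply, Matrix.mul_apply, Matrix.mulVec,
      dotProduct, Matrix.transpose_apply, mul_comm]
  have hMu' : (arrMat v)ᵀ * arrMat u' = 0 := by
    rw [harr, Matrix.mul_sub, ← Matrix.mul_assoc, hvn, Matrix.one_mul, ← hA, sub_self]
  have hu'ne : u' ≠ 0 := by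
    intro h0
    apply hne
    have hSunit : IsUnit S.det := isUnit_iff_ne_zero.2 hdet
    set Z : Matrix (Fin d) (Fin d) ℝ := S⁻¹ * Aᵀ with hZ
    have hv₁eq : ∀ i, Z *ᵥ v i = v₁ i := by
      intro i
      have h1 : u' i = 0 := congrFun h0 i
      rw [hu'] at h1
      simp only [sub_eq_zero] at h1
      have h2 : S *ᵥ v₁ i = Aᵀ *ᵥ v i := h1
      calc Z *ᵥ v i = S⁻¹ *ᵥ (Aᵀ *ᵥ v i) := by rw [hZ, ← Matrix.mulVec_mulVec]
      _ = S⁻¹ *ᵥ (S *ᵥ v₁ i) := by rw [h2]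
      _ = (S⁻¹ * S) *ᵥ v₁ i := Matrix.mulVec_mulVec _ _ _
      _ = v₁ i := by rw [Matrix.nonsing_inv_mul S hSunit, Matrix.one_mulVec]
    have harr1 : arrMat v₁ = arrMat v * Zᵀ := by
      rw [← arrMat_mulVec]
      exact congrArg arrMat (funext fun i => (hv₁eq i).symm)
    have hZZ : Z * Zᵀ = 1 := by
      have h1 := hv₁n
      rw [harr1, Matrix.transpose_mul, Matrix.transpose_transpose, Matrix.mul_assoc,
        ← Matrix.mul_assoc (arrMat v)ᵀ (arrMat v) Zᵀ, hvn, Matrix.one_mul] at h1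
      exact h1
    have hZdet : Z.det ≠ 0 := by
      intro h0'
      have := congrArg Matrix.det hZZ
      rw [Matrix.det_mul, h0', zero_mul, Matrix.det_one] at this
      norm_num at this
    exact ⟨Z, hZdet, hv₁eq⟩
  set B : Matrix (Fin d) (Fin d) ℝ := (arrMat u')ᵀ * arrMat u' with hB
  have hcommB : ∀ φ : Γ, T φ * B = B * T φ := intertwine hT.1 hT.1 hequ' hequ'
  have hBsymm : Bᵀ = B := by
    rw [hB, Matrix.transpose_mul, Matrix.transpose_transpose]
  obtain ⟨i0, k0, hik⟩ : ∃ i0 k0, u' i0 k0 ≠ 0 := by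
    by_contra hc
    push_neg at hc
    exact hu'ne (funext fun i => funext fun k => hc i k)
  have hBkk : 0 < B k0 k0 := by
    rw [hB, _root_.gram_apply]
    apply Finset.sum_pos' (fun i _ => mul_self_nonneg _)
    exact ⟨i0, Finset.mem_univ _, mul_self_pos.2 hik⟩
  have hBne : B ≠ 0 := by
    intro h0
    rw [h0] at hBkk
    simp at hBkk
  obtain ⟨t, ht, hBt⟩ := comm_symm_scalar hTirr hBsymm hcommB hBne
  have htpos : 0 < t := by
    have := hBkk
    rw [hBt] at this
    simpa using this
  refine ⟨fun i => (Real.sqrt t)⁻¹ • u' i, ?_, ?_, ?_⟩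
  · intro φ i
    simp only
    rw [Matrix.mulVec_smul, hequ' φ i]
  · rw [arrMat_smul, Matrix.transpose_smul, Matrix.smul_mul, Matrix.mul_smul, ← hB, hBt,
      smul_smul, smul_smul]
    have hs : (Real.sqrt t)⁻¹ * (Real.sqrt t)⁻¹ * t = 1 := by
      rw [← mul_inv, Real.mul_self_sqrt htpos.le, inv_mul_cancel₀ htpos.ne']
    rw [hs, one_smul]
  · rw [arrMat_smul, Matrix.mul_smul, hMu', smul_zero]

end Stmt14Aux4
section Stmt14Aux5

open Matrix Set

variable {n d : ℕ} {Γ : Subgroup (Equiv.Perm (Fin n))}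

lemma gram_combo {a b : Fin n → Fin d → ℝ} (α β : ℝ)
    (haa : (arrMat a)ᵀ * arrMat a = 1) (hbb : (arrMat b)ᵀ * arrMat b = 1)
    (hab : (arrMat a)ᵀ * arrMat b = 0) (h1 : α ^ 2 + β ^ 2 = 1) :
    (arrMat (fun i => α • a i + β • b i))ᵀ * arrMat (fun i => α • a i + β • b i) = 1 := by
  have hba : (arrMat b)ᵀ * arrMat a = 0 := by
    have h2 := congrArg Matrix.transpose hab
    rwa [Matrix.transpose_mul, Matrix.transpose_transpose, Matrix.transpose_zero] at h2
  have harr : arrMat (fun i => α • a i + β • b i) = α • arrMat a + β • arrMat b := by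
    ext i k; simp [arrMat]
  rw [harr]
  simp only [Matrix.transpose_add, Matrix.transpose_smul, Matrix.add_mul, Matrix.mul_add,
    Matrix.smul_mul, Matrix.mul_smul, haa, hbb, hab, hba, smul_zero, add_zero, zero_add,
    smul_smul]
  rw [← add_smul]
  have h2 : α * α + β * β = 1 := by nlinarith [h1]
  rw [h2, one_smul]

lemma sdset_orth {X : Matrix (Fin d) (Fin d) ℝ} (hX : Xᵀ * X = 1)
    {a : Fin n → Fin d → ℝ} (ha : a ∈ SdSet n d Γ) :
    (fun i => X *ᵥ a i) ∈ SdSet n d Γ := by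
  have han : (arrMat a)ᵀ * arrMat a = 1 := ha.1
  have hXX : X * Xᵀ = 1 := mul_eq_one_comm.mp hX
  constructor
  · show (arrMat fun i => X *ᵥ a i)ᵀ * (arrMat fun i => X *ᵥ a i) = 1
    rw [arrMat_mulVec, Matrix.transpose_mul, Matrix.transpose_transpose, Matrix.mul_assoc,
      ← Matrix.mul_assoc (arrMat a)ᵀ (arrMat a) Xᵀ, han, Matrix.one_mul, hXX]
  · obtain ⟨T', hrep, heqv⟩ := ha.2
    refine ⟨fun φ => X * T' φ * Xᵀ, ⟨⟨?_, ?_⟩, ?_⟩⟩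
    · intro φ
      have h1 : (X * T' φ * Xᵀ)ᵀ = X * (T' φ)ᵀ * Xᵀ := by
        rw [Matrix.transpose_mul, Matrix.transpose_mul, Matrix.transpose_transpose,
          Matrix.mul_assoc]
      rw [h1]
      simp only [Matrix.mul_assoc]
      rw [← Matrix.mul_assoc Xᵀ X, hX, Matrix.one_mul, ← Matrix.mul_assoc (T' φ)ᵀ (T' φ),
        hrep.1 φ, Matrix.one_mul, hXX]
    · intro φ ψ
      apply Eq.symm
      simp only [Matrix.mul_assoc]
      rw [← Matrix.mul_assoc Xᵀ X, hX, Matrix.one_mul, ← Matrix.mul_assoc (T' φ) (T' ψ),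
        ← hrep.2 φ ψ]
    · intro φ i
      simp only
      rw [Matrix.mulVec_mulVec,
        show X * T' φ * Xᵀ * X = X * T' φ from by
          rw [Matrix.mul_assoc, Matrix.mul_assoc, hX, Matrix.mul_one],
        ← Matrix.mulVec_mulVec, heqv φ i]

lemma equiv_X {v b : Fin n → Fin d → ℝ} (hvn : IsNormalized v) (hbn : IsNormalized b)
    (h : AreEquivalent v b) :
    (∀ i, ((arrMat b)ᵀ * arrMat v) *ᵥ v i = b i) ∧
      ((arrMat b)ᵀ * arrMat v) * ((arrMat b)ᵀ * arrMat v)ᵀ = 1 := by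
  have hvn' : (arrMat v)ᵀ * arrMat v = 1 := hvn
  have hbn' : (arrMat b)ᵀ * arrMat b = 1 := hbn
  obtain ⟨Y, -, hY⟩ := h
  have harrb : arrMat b = arrMat v * Yᵀ := by
    rw [← arrMat_mulVec]
    exact congrArg arrMat (funext fun i => (hY i).symm)
  have hXY : (arrMat b)ᵀ * arrMat v = Y := by
    rw [harrb, Matrix.transpose_mul, Matrix.transpose_transpose, Matrix.mul_assoc, hvn',
      Matrix.mul_one]
  have hYY : Y * Yᵀ = 1 := by
    have h1 := hbn'
    rw [harrb, Matrix.transpose_mul, Matrix.transpose_transpose, Matrix.mul_assoc,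
      ← Matrix.mul_assoc (arrMat v)ᵀ (arrMat v) Yᵀ, hvn', Matrix.one_mul] at h1
    exact h1
  rw [hXY]
  exact ⟨fun i => hY i, hYY⟩

end Stmt14Aux5
section Stmt14Aux6

open Matrix Set

variable {n d : ℕ} {Γ : Subgroup (Equiv.Perm (Fin n))}

/-- Build a `Path` from a globally continuous function on `ℝ`. -/
noncomputable def mkPath {X : Type*} [TopologicalSpace X] (f : ℝ → X) (hf : Continuous f)
    {a b : X} (h0 : f 0 = a) (h1 : f 1 = b) : Path a b where
  toFun := fun t => f t
  continuous_toFun := hf.comp continuous_subtype_val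
  source' := by simpa using h0
  target' := by simpa using h1

lemma deformEquiv_of_joinedIn {a b : Fin n → Fin d → ℝ}
    (h : JoinedIn (SdSet n d Γ) a b) : DeformEquiv Γ a b := by
  obtain ⟨γ, hγ⟩ := h
  refine ⟨fun t => γ (Set.projIcc 0 1 zero_le_one t), ?_, ?_, ?_, ?_⟩
  · exact (γ.continuous.comp continuous_projIcc).continuousOn
  · intro t _; exact hγ _
  · simp
  · simp
lemma joinedIn_of_deformEquiv {a b : Fin n → Fin d → ℝ}
    (h : DeformEquiv Γ a b) : JoinedIn (SdSet n d Γ) a b := by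
  obtain ⟨c, hc, hmem, hc0, hc1⟩ := h
  refine ⟨⟨⟨fun t : unitInterval => c t, hc.restrict⟩, by simpa using hc0, by simpa using hc1⟩,
    fun t => hmem t t.2⟩

lemma joined_combo {v : Fin n → Fin d → ℝ} (hv : v ∈ SdSet n d Γ)
    {T : Γ → Matrix (Fin d) (Fin d) ℝ} (hT : IsRepOf Γ T v)
    {w' : Fin n → Fin d → ℝ} (hw'e : ∀ (φ : Γ) (i : Fin n), T φ *ᵥ w' i = w' (φ.val i))
    (hw'g : (arrMat w')ᵀ * arrMat w' = 1) (hcross : (arrMat v)ᵀ * arrMat w' = 0) :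
    JoinedIn (SdSet n d Γ) v (fun i => -(v i)) := by
  have hvn : (arrMat v)ᵀ * arrMat v = 1 := hv.1
  have hmem : ∀ θ : ℝ, (fun i => Real.cos θ • v i + Real.sin θ • w' i) ∈ SdSet n d Γ := by
    intro θ
    constructor
    · exact gram_combo _ _ hvn hw'g hcross (Real.cos_sq_add_sin_sq θ)
    · refine ⟨T, hT.1, fun φ i => ?_⟩
      simp only
      rw [Matrix.mulVec_add, Matrix.mulVec_smul, Matrix.mulVec_smul, hT.2 φ i, hw'e φ i]
  have hcont : Continuous (fun θ : ℝ => (fun i => Real.cos θ • v i + Real.sin θ • w' i)) := by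
    apply continuous_pi; intro i; apply continuous_pi; intro k
    simp only [Pi.add_apply, Pi.smul_apply, smul_eq_mul]
    exact (Real.continuous_cos.mul continuous_const).add
      (Real.continuous_sin.mul continuous_const)
  refine ⟨mkPath (fun s => (fun i => Real.cos (Real.pi * s) • v i + Real.sin (Real.pi * s) • w' i))
    (hcont.comp (continuous_const.mul continuous_id)) ?_ ?_, fun t => hmem _⟩
  · funext i; simp
  · funext i; simp [Real.cos_pi, Real.sin_pi]

lemma joined_map_orth {X : Matrix (Fin d) (Fin d) ℝ} (hX : Xᵀ * X = 1)
    {a b : Fin n → Fin d → ℝ} (h : JoinedIn (SdSet n d Γ) a b) :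
    JoinedIn (SdSet n d Γ) (fun i => X *ᵥ a i) (fun i => X *ᵥ b i) := by
  have hcont : Continuous (fun (w : Fin n → Fin d → ℝ) => fun i => X *ᵥ w i) :=
    continuous_pi fun i => (continuous_const.matrix_mulVec (continuous_apply i))
  have h2 := h.map hcont
  exact h2.mono (by rintro _ ⟨c, hc, rfl⟩; exact sdset_orth hX hc)

lemma joined_of_OD {R : Matrix (Fin d) (Fin d) ℝ}
    (hR : JoinedIn {X : Matrix (Fin d) (Fin d) ℝ | Xᵀ * X = 1} 1 R)
    {a : Fin n → Fin d → ℝ} (ha : a ∈ SdSet n d Γ) :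
    JoinedIn (SdSet n d Γ) a (fun i => R *ᵥ a i) := by
  have hcont : Continuous (fun (X : Matrix (Fin d) (Fin d) ℝ) => fun i => X *ᵥ a i) :=
    continuous_pi fun i => (continuous_id.matrix_mulVec continuous_const)
  have h2 := hR.map hcont
  simp only [Matrix.one_mulVec] at h2
  exact h2.mono (by rintro _ ⟨Y, hY, rfl⟩; exact sdset_orth hY ha)

end Stmt14Aux6
section Stmt14Aux7

open Matrix Set

variable {d : ℕ}

/-- Reflection matrix in the hyperplane orthogonal to `u`. -/
noncomputable def reflM (u : Fin d → ℝ) : Matrix (Fin d) (Fin d) ℝ :=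
  1 - (2 : ℝ) • Matrix.vecMulVec u u

lemma vecMulVec_mulVec' (u v x : Fin d → ℝ) :
    Matrix.vecMulVec u v *ᵥ x = (v ⬝ᵥ x) • u := by
  funext k
  simp only [Matrix.mulVec, dotProduct, Matrix.vecMulVec_apply, Pi.smul_apply,
    smul_eq_mul, Finset.sum_mul]
  exact Finset.sum_congr rfl fun j _ => by ring

lemma vecMulVec_mul_vecMulVec (a b c e : Fin d → ℝ) :
    Matrix.vecMulVec a b * Matrix.vecMulVec c e = (b ⬝ᵥ c) • Matrix.vecMulVec a e := by
  ext i j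
  simp only [Matrix.mul_apply, Matrix.vecMulVec_apply, Matrix.smul_apply, smul_eq_mul,
    dotProduct, Finset.sum_mul]
  exact Finset.sum_congr rfl fun k _ => by ring

lemma reflM_mulVec (u x : Fin d → ℝ) : reflM u *ᵥ x = x - (2 * (u ⬝ᵥ x)) • u := by
  rw [reflM, Matrix.sub_mulVec, Matrix.smul_mulVec, vecMulVec_mulVec',
    Matrix.one_mulVec, smul_smul]

lemma reflM_transpose (u : Fin d → ℝ) : (reflM u)ᵀ = reflM u := by
  rw [reflM, Matrix.transpose_sub, Matrix.transpose_one, Matrix.transpose_smul]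
  congr 1
  ext i j
  simp [Matrix.vecMulVec_apply, mul_comm]

lemma reflM_mul_self {u : Fin d → ℝ} (hu : u ⬝ᵥ u = 1) : reflM u * reflM u = 1 := by
  set P := Matrix.vecMulVec u u with hP
  have hPP : ((2:ℝ) • P) * ((2:ℝ) • P) = (4:ℝ) • P := by
    rw [Matrix.smul_mul, Matrix.mul_smul, smul_smul, hP, vecMulVec_mul_vecMulVec, hu, one_smul]
    norm_num
  rw [reflM, sub_mul, mul_sub, mul_sub]
  simp only [Matrix.one_mul, Matrix.mul_one, ← hP]
  rw [hPP]
  module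

lemma reflM_orth {u : Fin d → ℝ} (hu : u ⬝ᵥ u = 1) : (reflM u)ᵀ * reflM u = 1 := by
  rw [reflM_transpose]; exact reflM_mul_self hu

lemma reflM_det {u : Fin d → ℝ} (hu : u ⬝ᵥ u = 1) : (reflM u).det = -1 := by
  have h1 : reflM u = 1 + Matrix.replicateCol (Fin 1) u * Matrix.replicateRow (Fin 1) ((-2 : ℝ) • u) := by
    rw [show Matrix.replicateCol (Fin 1) u * Matrix.replicateRow (Fin 1) ((-2 : ℝ) • u)
        = Matrix.vecMulVec u ((-2 : ℝ) • u) from (Matrix.vecMulVec_eq (ι := Fin 1) u _).symm]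
    ext i j
    simp only [reflM, Matrix.sub_apply, Matrix.add_apply, Matrix.smul_apply,
      Matrix.vecMulVec_apply, Pi.smul_apply, smul_eq_mul]
    ring
  rw [h1]
  refine (Matrix.det_one_add_replicateCol_mul_replicateRow u ((-2 : ℝ) • u)).trans ?_
  simp only [smul_dotProduct, hu, smul_eq_mul]
  norm_num

lemma continuous_reflM : Continuous (reflM (d := d)) := by
  apply continuous_matrix; intro i j
  simp only [reflM, Matrix.sub_apply, Matrix.smul_apply, Matrix.vecMulVec_apply, smul_eq_mul]
  exact continuous_const.sub
    (continuous_const.mul ((continuous_apply i).mul (continuous_apply j)))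

end Stmt14Aux7
section Stmt14Aux8

open Matrix Set

variable {d : ℕ}

lemma eq_one_of_ker_top {X : Matrix (Fin d) (Fin d) ℝ}
    (htop : LinearMap.ker (X - 1).mulVecLin = ⊤) : X = 1 := by
  have hz : ∀ x, (X - 1) *ᵥ x = 0 := by
    intro x
    have hx : x ∈ LinearMap.ker (X - 1).mulVecLin := by rw [htop]; trivial
    simpa [Matrix.mulVecLin_apply, Matrix.sub_mulVec] using hx
  have hX : X - 1 = 0 := by
    ext i j
    have h1 := congrFun (hz (Pi.single j 1)) i
    simpa [Matrix.mulVec_single] using h1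
  rwa [sub_eq_zero] at hX

lemma mulVec_dot_mulVec {X : Matrix (Fin d) (Fin d) ℝ} (hX : Xᵀ * X = 1) (a b : Fin d → ℝ) :
    (X *ᵥ a) ⬝ᵥ (X *ᵥ b) = a ⬝ᵥ b := by
  have h1 := Matrix.vecMul_transpose Xᵀ (X *ᵥ a)
  rw [Matrix.transpose_transpose] at h1
  rw [Matrix.dotProduct_mulVec, h1, Matrix.mulVec_mulVec, hX, Matrix.one_mulVec]

lemma refl_factor : ∀ (k : ℕ) (X : Matrix (Fin d) (Fin d) ℝ), Xᵀ * X = 1 →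
    d - Module.finrank ℝ (LinearMap.ker (X - 1).mulVecLin) ≤ k →
    ∃ L : List (Fin d → ℝ), (∀ u ∈ L, u ⬝ᵥ u = 1) ∧ X = (L.map reflM).prod := by
  intro k
  induction k with
  | zero =>
    intro X hX hk
    refine ⟨[], by simp, ?_⟩
    have hfr : Module.finrank ℝ (LinearMap.ker (X - 1).mulVecLin) ≤ d := by
      have h1 := Submodule.finrank_le (LinearMap.ker (X - 1).mulVecLin)
      rwa [Module.finrank_fin_fun] at h1
    have htop : LinearMap.ker (X - 1).mulVecLin = ⊤ := by
      apply Submodule.eq_top_of_finrank_eq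
      rw [Module.finrank_fin_fun]
      omega
    simpa using eq_one_of_ker_top htop
  | succ k ih =>
    intro X hX hk
    by_cases htop : LinearMap.ker (X - 1).mulVecLin = ⊤
    · exact ⟨[], by simp, by simpa using eq_one_of_ker_top htop⟩
    · obtain ⟨x, hx⟩ : ∃ x, x ∉ LinearMap.ker (X - 1).mulVecLin := by
        by_contra h
        push_neg at h
        exact htop (eq_top_iff.2 fun x _ => h x)
      set y : Fin d → ℝ := X *ᵥ x - x with hy
      have hyne : y ≠ 0 := by
        intro h0
        apply hx
        simp only [LinearMap.mem_ker, Matrix.mulVecLin_apply, Matrix.sub_mulVec,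
          Matrix.one_mulVec]
        exact h0
      have hyy : 0 < y ⬝ᵥ y := by
        rcases (Finset.sum_nonneg fun i _ => mul_self_nonneg (y i)).lt_or_eq with h | h
        · exact h
        · exfalso
          apply hyne
          funext i
          have h1 := (Finset.sum_eq_zero_iff_of_nonneg
            (fun i _ => mul_self_nonneg (y i))).1 h.symm i (Finset.mem_univ i)
          exact mul_self_eq_zero.mp h1
      set c : ℝ := (Real.sqrt (y ⬝ᵥ y))⁻¹ with hc
      have hcc : c * c = (y ⬝ᵥ y)⁻¹ := by
        rw [hc, ← mul_inv, Real.mul_self_sqrt hyy.le]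
      set u : Fin d → ℝ := c • y with hu
      have huu : u ⬝ᵥ u = 1 := by
        rw [hu, smul_dotProduct, dotProduct_smul, smul_eq_mul, smul_eq_mul,
          ← mul_assoc, hcc, inv_mul_cancel₀ hyy.ne']
      have hydot : 2 * (y ⬝ᵥ (X *ᵥ x)) = y ⬝ᵥ y := by
        have h1 : (X *ᵥ x) ⬝ᵥ (X *ᵥ x) = x ⬝ᵥ x := mulVec_dot_mulVec hX x x
        have h2 : x ⬝ᵥ (X *ᵥ x) = (X *ᵥ x) ⬝ᵥ x := dotProduct_comm _ _
        simp only [hy, sub_dotProduct, dotProduct_sub, h1]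
        rw [h2]
        ring
      have hux : reflM u *ᵥ (X *ᵥ x) = x := by
        rw [reflM_mulVec]
        have h1 : u ⬝ᵥ (X *ᵥ x) = c * (y ⬝ᵥ (X *ᵥ x)) := by
          rw [hu, smul_dotProduct, smul_eq_mul]
        rw [h1, hu, smul_smul]
        have h2 : 2 * (c * (y ⬝ᵥ X *ᵥ x)) * c = 1 := by
          have : 2 * (c * (y ⬝ᵥ X *ᵥ x)) * c = (2 * (y ⬝ᵥ X *ᵥ x)) * (c * c) := by ring
          rw [this, hydot, hcc, mul_inv_cancel₀ hyy.ne']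
        rw [h2, one_smul, hy]
        abel
      set X' : Matrix (Fin d) (Fin d) ℝ := reflM u * X with hX'
      have hX'orth : X'ᵀ * X' = 1 := by
        rw [hX', Matrix.transpose_mul, Matrix.mul_assoc,
          ← Matrix.mul_assoc (reflM u)ᵀ (reflM u) X, reflM_orth huu, Matrix.one_mul, hX]
      have hsub : LinearMap.ker (X - 1).mulVecLin ⊔ Submodule.span ℝ {x}
          ≤ LinearMap.ker (X' - 1).mulVecLin := by
        apply sup_le
        · intro z hz
          have hz1 : X *ᵥ z = z := by
            have h1 : (X - 1) *ᵥ z = 0 := by simpa [Matrix.mulVecLin_apply, Matrix.sub_mulVec] using hz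
            rw [Matrix.sub_mulVec, Matrix.one_mulVec, sub_eq_zero] at h1
            exact h1
          have hyz : y ⬝ᵥ z = 0 := by
            have h1 : (X *ᵥ x) ⬝ᵥ (X *ᵥ z) = x ⬝ᵥ z := mulVec_dot_mulVec hX x z
            rw [hz1] at h1
            simp [hy, sub_dotProduct, h1]
          have huz : u ⬝ᵥ z = 0 := by
            rw [hu, smul_dotProduct, hyz, smul_eq_mul, mul_zero]
          simp only [LinearMap.mem_ker, Matrix.mulVecLin_apply, Matrix.sub_mulVec,
            Matrix.one_mulVec, sub_eq_zero, hX', ← Matrix.mulVec_mulVec, hz1, reflM_mulVec,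
            huz, mul_zero, zero_smul, sub_zero]
        · rw [Submodule.span_le, Set.singleton_subset_iff]
          have hXx : X' *ᵥ x = x := by
            rw [hX', ← Matrix.mulVec_mulVec, hux]
          simp only [SetLike.mem_coe, LinearMap.mem_ker, Matrix.mulVecLin_apply,
            Matrix.sub_mulVec, Matrix.one_mulVec, sub_eq_zero]
          exact hXx
      have hxmem : x ∈ LinearMap.ker (X - 1).mulVecLin ⊔ Submodule.span ℝ {x} :=
        Submodule.mem_sup_right (Submodule.mem_span_singleton_self x)
      have hlt : LinearMap.ker (X - 1).mulVecLin < LinearMap.ker (X' - 1).mulVecLin := by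
        apply lt_of_lt_of_le _ hsub
        exact lt_of_le_of_ne le_sup_left (fun h => hx (by rw [h]; exact hxmem))
      have hfin : Module.finrank ℝ (LinearMap.ker (X - 1).mulVecLin)
          < Module.finrank ℝ (LinearMap.ker (X' - 1).mulVecLin) :=
        Submodule.finrank_lt_finrank_of_lt hlt
      obtain ⟨L, hL, hLX⟩ := ih X' hX'orth (by omega)
      refine ⟨u :: L, ?_, ?_⟩
      · intro z hz
        rcases List.mem_cons.1 hz with h | h
        · rw [h]; exact huu
        · exact hL z h
      · rw [List.map_cons, List.prod_cons, ← hLX, hX', ← Matrix.mul_assoc,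
          reflM_mul_self huu, Matrix.one_mul]

lemma det_refl_prod : ∀ L : List (Fin d → ℝ), (∀ u ∈ L, u ⬝ᵥ u = 1) →
    ((L.map reflM).prod).det = (-1 : ℝ) ^ L.length := by
  intro L
  induction L with
  | nil => simp
  | cons u L ih =>
    intro h
    rw [List.map_cons, List.prod_cons, Matrix.det_mul, reflM_det (h u List.mem_cons_self),
      ih (fun z hz => h z (List.mem_cons_of_mem u hz)), List.length_cons, pow_succ]
    ring

end Stmt14Aux8
section Stmt14Aux9

open Matrix Set

variable {d : ℕ}

lemma dotProduct_self_nonneg (x : Fin d → ℝ) : 0 ≤ x ⬝ᵥ x :=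
  Finset.sum_nonneg fun i _ => mul_self_nonneg (x i)

lemma dotProduct_self_pos {x : Fin d → ℝ} (hx : x ≠ 0) : 0 < x ⬝ᵥ x := by
  rcases (dotProduct_self_nonneg x).lt_or_eq with h | h
  · exact h
  · exfalso
    apply hx
    funext i
    have h1 := (Finset.sum_eq_zero_iff_of_nonneg
      (fun i _ => mul_self_nonneg (x i))).1 h.symm i (Finset.mem_univ i)
    exact mul_self_eq_zero.mp h1

lemma sphere_pathConnected (hd2 : 2 ≤ d) :
    IsPathConnected {x : Fin d → ℝ | x ⬝ᵥ x = 1} := by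
  have hrank : 1 < Module.rank ℝ (Fin d → ℝ) := by
    rw [rank_fin_fun]
    exact_mod_cast hd2.trans_lt' one_lt_two
  have hA := isPathConnected_compl_singleton_of_one_lt_rank hrank (0 : Fin d → ℝ)
  have hcont : ContinuousOn (fun x : Fin d → ℝ => (Real.sqrt (x ⬝ᵥ x))⁻¹ • x) {(0 : Fin d → ℝ)}ᶜ := by
    intro x hx
    have hxne : x ≠ 0 := hx
    have hpos : 0 < x ⬝ᵥ x := dotProduct_self_pos hxne
    apply ContinuousWithinAt.fun_smul _ continuousWithinAt_id
    apply ContinuousWithinAt.inv₀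
    · apply Continuous.continuousWithinAt
      apply Real.continuous_sqrt.comp
      exact continuous_finset_sum _ fun i _ => (continuous_apply i).mul (continuous_apply i)
    · exact (Real.sqrt_pos.2 hpos).ne'
  have himg : (fun x : Fin d → ℝ => (Real.sqrt (x ⬝ᵥ x))⁻¹ • x) '' ({(0 : Fin d → ℝ)}ᶜ)
      = {x : Fin d → ℝ | x ⬝ᵥ x = 1} := by
    apply Set.Subset.antisymm
    · rintro _ ⟨x, hx, rfl⟩
      have hxne : x ≠ 0 := hx
      have hpos : 0 < x ⬝ᵥ x := dotProduct_self_pos hxne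
      have hcc : (Real.sqrt (x ⬝ᵥ x))⁻¹ * (Real.sqrt (x ⬝ᵥ x))⁻¹ = (x ⬝ᵥ x)⁻¹ := by
        rw [← mul_inv, Real.mul_self_sqrt hpos.le]
      show ((Real.sqrt (x ⬝ᵥ x))⁻¹ • x) ⬝ᵥ ((Real.sqrt (x ⬝ᵥ x))⁻¹ • x) = 1
      rw [smul_dotProduct, dotProduct_smul, smul_eq_mul, smul_eq_mul, ← mul_assoc,
        hcc, inv_mul_cancel₀ hpos.ne']
    · intro x hx
      have hx1 : x ⬝ᵥ x = 1 := hx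
      have hxne : x ≠ 0 := by
        intro h0
        rw [h0] at hx1
        simp [zero_dotProduct] at hx1
      exact ⟨x, hxne, by show (Real.sqrt (x ⬝ᵥ x))⁻¹ • x = x; rw [hx1]; simp⟩
  rw [← himg]
  exact hA.image' hcont

lemma OD_mul {A B : Matrix (Fin d) (Fin d) ℝ} (hA : Aᵀ * A = 1) (hB : Bᵀ * B = 1) :
    (A * B)ᵀ * (A * B) = 1 := by
  rw [Matrix.transpose_mul, Matrix.mul_assoc, ← Matrix.mul_assoc Aᵀ A B, hA, Matrix.one_mul, hB]

lemma joined_pair (hd2 : 2 ≤ d) {u w : Fin d → ℝ} (hu : u ⬝ᵥ u = 1) (hw : w ⬝ᵥ w = 1) :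
    JoinedIn {X : Matrix (Fin d) (Fin d) ℝ | Xᵀ * X = 1} 1 (reflM u * reflM w) := by
  have hj : JoinedIn {x : Fin d → ℝ | x ⬝ᵥ x = 1} u w :=
    (sphere_pathConnected hd2).joinedIn u hu w hw
  have h2 := hj.map (f := fun x => reflM u * reflM x)
    (continuous_const.matrix_mul continuous_reflM)
  simp only [reflM_mul_self hu] at h2
  exact h2.mono (by
    rintro _ ⟨x, hx, rfl⟩
    exact OD_mul (reflM_orth hu) (reflM_orth hx))

lemma joined_prod (hd2 : 2 ≤ d) : ∀ (m : ℕ) (L : List (Fin d → ℝ)), L.length ≤ m →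
    (∀ u ∈ L, u ⬝ᵥ u = 1) → Even L.length →
    JoinedIn {X : Matrix (Fin d) (Fin d) ℝ | Xᵀ * X = 1} 1 (L.map reflM).prod := by
  intro m
  induction m with
  | zero =>
    intro L hlen _ _
    have : L = [] := List.eq_nil_of_length_eq_zero (Nat.le_zero.1 hlen)
    subst this
    simp only [List.map_nil, List.prod_nil]
    exact JoinedIn.refl (by simp [Set.mem_setOf_eq, Matrix.transpose_one, Matrix.one_mul])
  | succ m ih =>
    intro L hlen hunit heven
    match L with
    | [] =>
      simp only [List.map_nil, List.prod_nil]
      exact JoinedIn.refl (by simp [Set.mem_setOf_eq, Matrix.transpose_one, Matrix.one_mul])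
    | [u] => simp [Nat.even_add_one] at heven
    | u :: w :: L' =>
      have hu : u ⬝ᵥ u = 1 := hunit u (by simp)
      have hw : w ⬝ᵥ w = 1 := hunit w (by simp)
      have h1 := joined_pair hd2 hu hw
      have hlen' : L'.length ≤ m := by
        simp only [List.length_cons] at hlen
        omega
      have heven' : Even L'.length := by
        simpa [List.length_cons, Nat.even_add_one, not_not] using heven
      have h2 := ih L' hlen' (fun z hz => hunit z (by simp [hz])) heven'
      obtain ⟨γ₁, hγ₁⟩ := h1
      obtain ⟨γ₂, hγ₂⟩ := h2
      refine ⟨⟨⟨fun t => γ₁ t * γ₂ t, (γ₁.continuous.matrix_mul γ₂.continuous)⟩, ?_, ?_⟩,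
        fun t => OD_mul (hγ₁ t) (hγ₂ t)⟩
      · show γ₁ 0 * γ₂ 0 = 1
        rw [γ₁.source, γ₂.source, Matrix.one_mul]
      · show γ₁ 1 * γ₂ 1 = _
        rw [γ₁.target, γ₂.target]
        simp only [List.map_cons, List.prod_cons, Matrix.mul_assoc]

lemma joined_so (hd2 : 2 ≤ d) {X : Matrix (Fin d) (Fin d) ℝ} (hX : Xᵀ * X = 1)
    (hdet : X.det = 1) :
    JoinedIn {Y : Matrix (Fin d) (Fin d) ℝ | Yᵀ * Y = 1} 1 X := by
  obtain ⟨L, hL, rfl⟩ := refl_factor d X hX (Nat.sub_le _ _)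
  have hdl := det_refl_prod L hL
  have heven : Even L.length := by
    rcases Nat.even_or_odd L.length with h | h
    · exact h
    · exfalso
      rw [hdet, Odd.neg_one_pow h] at hdl
      norm_num at hdl
  exact joined_prod hd2 L.length L le_rfl hL heven

end Stmt14Aux9
section Stmt14Aux10

open Matrix Set

variable {n d : ℕ} {Γ : Subgroup (Equiv.Perm (Fin n))}

lemma gram_det_continuous (v : Fin n → Fin d → ℝ) :
    Continuous (fun a : Fin n → Fin d → ℝ => ((arrMat a)ᵀ * arrMat v).det) := by
  apply Continuous.matrix_det
  apply Continuous.matrix_mul (Continuous.matrix_transpose ?_) continuous_const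
  exact continuous_matrix fun i j => (continuous_apply j).comp (continuous_apply i)

lemma deform_prefix {v : Fin n → Fin d → ℝ} {c : ℝ → (Fin n → Fin d → ℝ)}
    (hc : ContinuousOn c (Icc (0:ℝ) 1)) (hcmem : ∀ t ∈ Icc (0:ℝ) 1, c t ∈ SdSet n d Γ)
    (hc0 : c 0 = v) {t : ℝ} (ht : t ∈ Icc (0:ℝ) 1) : DeformEquiv Γ v (c t) := by
  have hmap : ∀ s ∈ Icc (0:ℝ) 1, t * s ∈ Icc (0:ℝ) 1 := by
    intro s hs
    exact ⟨mul_nonneg ht.1 hs.1, mul_le_one₀ ht.2 hs.1 hs.2⟩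
  refine ⟨fun s => c (t * s), ?_, ?_, ?_, ?_⟩
  · exact hc.comp (continuous_const.mul continuous_id).continuousOn hmap
  · intro s hs; exact hcmem _ (hmap s hs)
  · simpa using hc0
  · simp

lemma sq_one_of_equiv {v b : Fin n → Fin d → ℝ} (hvn : IsNormalized v) (hbn : IsNormalized b)
    (h : AreEquivalent v b) :
    ((arrMat b)ᵀ * arrMat v).det * ((arrMat b)ᵀ * arrMat v).det = 1 := by
  obtain ⟨-, hXX⟩ := equiv_X hvn hbn h
  have h1 := congrArg Matrix.det hXX
  rwa [Matrix.det_mul, Matrix.det_transpose, Matrix.det_one] at h1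

lemma exists_good {v : Fin n → Fin d → ℝ} (hv : v ∈ SdSet n d Γ) (hflex : Flexible Γ v) :
    ∃ v₁, v₁ ∈ SdSet n d Γ ∧ ¬ AreEquivalent v v₁ ∧ ((arrMat v)ᵀ * arrMat v₁).det ≠ 0 := by
  classical
  obtain ⟨w, hDw, hnew⟩ := hflex
  obtain ⟨c, hc, hcmem, hc0, hc1⟩ := hDw
  set g : ℝ → ℝ := fun t => ((arrMat (c t))ᵀ * arrMat v).det with hg
  have hgc : ContinuousOn g (Icc 0 1) := (gram_det_continuous v).comp_continuousOn hc
  have hvn : (arrMat v)ᵀ * arrMat v = 1 := hv.1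
  have hg0 : g 0 = 1 := by rw [hg]; simp only [hc0, hvn, Matrix.det_one]
  have hswap : ∀ b : Fin n → Fin d → ℝ,
      ((arrMat v)ᵀ * arrMat b).det = ((arrMat b)ᵀ * arrMat v).det := by
    intro b
    rw [← Matrix.det_transpose, Matrix.transpose_mul, Matrix.transpose_transpose]
  by_cases h1 : g 1 = 0
  · by_contra hcon
    push_neg at hcon
    set Z : Set ℝ := Icc 0 1 ∩ g ⁻¹' {0} with hZ
    have hZc : IsClosed Z := hgc.preimage_isClosed_of_isClosed isClosed_Icc isClosed_singleton
    have hZne : Z.Nonempty := ⟨1, ⟨by norm_num, by simpa using h1⟩⟩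
    have hZbdd : BddBelow Z := ⟨0, fun t ht => ht.1.1⟩
    set t0 := sInf Z with ht0
    have ht0Z : t0 ∈ Z := hZc.csInf_mem hZne hZbdd
    have ht0Icc : t0 ∈ Icc (0:ℝ) 1 := ht0Z.1
    have hgt0 : g t0 = 0 := ht0Z.2
    have ht0pos : 0 < t0 := by
      rcases ht0Icc.1.lt_or_eq with h | h
      · exact h
      · exfalso; rw [← h] at hgt0; rw [hg0] at hgt0; norm_num at hgt0
    have hequiv : ∀ t, t ∈ Ico (0:ℝ) t0 → AreEquivalent v (c t) := by
      intro t ht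
      have htIcc : t ∈ Icc (0:ℝ) 1 := ⟨ht.1, ht.2.le.trans ht0Icc.2⟩
      have hgt : g t ≠ 0 := by
        intro h0
        have : t0 ≤ t := csInf_le hZbdd ⟨htIcc, by simpa using h0⟩
        exact absurd ht.2 (not_lt.2 this)
      by_contra hneq
      apply hgt
      have := hcon (c t) (hcmem t htIcc) hneq
      rw [hswap (c t)] at this
      exact this
    -- limit argument: c t0 = X(t0) ∘ v with X(t0) singular, contradiction
    set F : ℝ → (Fin n → Fin d → ℝ) :=
      fun t => fun i => ((arrMat (c t))ᵀ * arrMat v) *ᵥ v i - c t i with hF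
    have hFcont : ContinuousOn F (Icc 0 1) := by
      have hXc : Continuous (fun a : Fin n → Fin d → ℝ => (arrMat a)ᵀ * arrMat v) := by
        apply Continuous.matrix_mul (Continuous.matrix_transpose ?_) continuous_const
        exact continuous_matrix fun i j => (continuous_apply j).comp (continuous_apply i)
      apply ContinuousOn.sub _ hc
      have hcont2 : Continuous (fun a : Fin n → Fin d → ℝ =>
          fun i => ((arrMat a)ᵀ * arrMat v) *ᵥ v i) :=
        continuous_pi fun i => (hXc.matrix_mulVec continuous_const)
      exact hcont2.comp_continuousOn hc
    have hFzero : ∀ t ∈ Ico (0:ℝ) t0, F t = 0 := by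
      intro t ht
      have htIcc : t ∈ Icc (0:ℝ) 1 := ⟨ht.1, ht.2.le.trans ht0Icc.2⟩
      obtain ⟨hXv, -⟩ := equiv_X hv.1 (hcmem t htIcc).1 (hequiv t ht)
      funext i
      simp only [hF, Pi.zero_apply, sub_eq_zero]
      exact hXv i
    have hFt0 : F t0 = 0 := by
      set A : Set ℝ := Icc 0 t0 ∩ F ⁻¹' {0} with hA
      have hAc : IsClosed A :=
        (hFcont.mono (Icc_subset_Icc le_rfl ht0Icc.2)).preimage_isClosed_of_isClosed
          isClosed_Icc isClosed_singleton
      have hsub2 : Ico (0:ℝ) t0 ⊆ A := fun t ht => ⟨⟨ht.1, ht.2.le⟩, by simpa using hFzero t ht⟩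
      have hclos : Icc (0:ℝ) t0 ⊆ A := by
        rw [← closure_Ico ht0pos.ne]
        exact closure_minimal hsub2 hAc
      have := hclos ⟨ht0pos.le, le_rfl⟩
      simpa using this.2
    have hXv : ∀ i, ((arrMat (c t0))ᵀ * arrMat v) *ᵥ v i = c t0 i := by
      intro i
      have h2 := congrFun hFt0 i
      simp only [hF, Pi.zero_apply, sub_eq_zero] at h2
      exact h2
    set X : Matrix (Fin d) (Fin d) ℝ := (arrMat (c t0))ᵀ * arrMat v with hX
    have harrct0 : arrMat (c t0) = arrMat v * Xᵀ := by
      rw [← arrMat_mulVec]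
      exact congrArg arrMat (funext fun i => (hXv i).symm)
    have hnorm : (arrMat (c t0))ᵀ * arrMat (c t0) = 1 := (hcmem t0 ht0Icc).1
    rw [harrct0, Matrix.transpose_mul, Matrix.transpose_transpose, Matrix.mul_assoc,
      ← Matrix.mul_assoc (arrMat v)ᵀ (arrMat v) Xᵀ, hvn, Matrix.one_mul] at hnorm
    have hdet1 : X.det * X.det = 1 := by
      have h2 := congrArg Matrix.det hnorm
      rwa [Matrix.det_mul, Matrix.det_transpose, Matrix.det_one] at h2
    have hXg : X.det = g t0 := rfl
    rw [hXg, hgt0] at hdet1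
    norm_num at hdet1
  · refine ⟨w, by rw [← hc1]; exact hcmem 1 (by norm_num), hnew, ?_⟩
    rw [hswap w, ← hc1]
    exact h1

end Stmt14Aux10
section Stmt14Aux11

open Matrix Set

variable {n d : ℕ} {Γ : Subgroup (Equiv.Perm (Fin n))}

lemma forward_dir {v : Fin n → Fin d → ℝ} (hv : v ∈ SdSet n d Γ)
    {τ : Matrix (Fin d) (Fin d) ℝ} (hτdet : τ.det = -1)
    (hdef : DeformEquiv Γ v (fun i => τ *ᵥ v i)) : Flexible Γ v := by
  by_contra hflex
  have hAll : ∀ w, DeformEquiv Γ v w → AreEquivalent v w := by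
    intro w hw
    by_contra hne
    exact hflex ⟨w, hw, hne⟩
  obtain ⟨c, hc, hcmem, hc0, hc1⟩ := hdef
  set g : ℝ → ℝ := fun t => ((arrMat (c t))ᵀ * arrMat v).det with hg
  have hgc : ContinuousOn g (Icc 0 1) := (gram_det_continuous v).comp_continuousOn hc
  have hvn : (arrMat v)ᵀ * arrMat v = 1 := hv.1
  have hg0 : g 0 = 1 := by rw [hg]; simp only [hc0, hvn, Matrix.det_one]
  have hg1 : g 1 = -1 := by
    rw [hg]
    simp only [hc1]
    rw [arrMat_mulVec, Matrix.transpose_mul, Matrix.transpose_transpose, Matrix.mul_assoc,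
      hvn, Matrix.mul_one, hτdet]
  have hsq : ∀ t ∈ Icc (0:ℝ) 1, g t * g t = 1 := fun t ht =>
    sq_one_of_equiv hv.1 (hcmem t ht).1 (hAll (c t) (deform_prefix hc hcmem hc0 ht))
  have h0mem : (0:ℝ) ∈ Icc (g 1) (g 0) := by rw [hg0, hg1]; norm_num
  obtain ⟨t, htIcc, hgt⟩ := intermediate_value_Icc' (by norm_num : (0:ℝ) ≤ 1) hgc h0mem
  have hcontra := hsq t htIcc
  rw [hgt] at hcontra
  norm_num at hcontra

lemma backward_dir (hd : Odd d) {v : Fin n → Fin d → ℝ} (hv : v ∈ SdSet n d Γ)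
    {T : Γ → Matrix (Fin d) (Fin d) ℝ} (hT : IsRepOf Γ T v) (hTirr : IrredRep Γ T)
    {τ : Matrix (Fin d) (Fin d) ℝ} (hτ : τᵀ * τ = 1) (hτdet : τ.det = -1)
    (hflex : Flexible Γ v) : DeformEquiv Γ v (fun i => τ *ᵥ v i) := by
  obtain ⟨v₁, hv₁, hne, hdet⟩ := exists_good hv hflex
  obtain ⟨w', hw'e, hw'g, hcross⟩ := exists_flex hv hT hTirr hv₁ hne hdet
  have hneg : JoinedIn (SdSet n d Γ) v (fun i => -(v i)) := joined_combo hv hT hw'e hw'g hcross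
  apply deformEquiv_of_joinedIn
  by_cases hd2 : 2 ≤ d
  · have hRorth : (-τ)ᵀ * (-τ) = 1 := by
      rw [Matrix.transpose_neg, Matrix.neg_mul, Matrix.mul_neg, neg_neg, hτ]
    have hRdet : (-τ).det = 1 := by
      rw [Matrix.det_neg, hτdet]
      simp [Odd.neg_one_pow, hd]
    have hso := joined_so hd2 hRorth hRdet
    have hj1 : JoinedIn (SdSet n d Γ) v (fun i => (-τ) *ᵥ v i) := joined_of_OD hso hv
    have hneg1orth : ((-1 : Matrix (Fin d) (Fin d) ℝ))ᵀ * (-1) = 1 := by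
      rw [Matrix.transpose_neg, Matrix.transpose_one]
      simp
    have hj2 := joined_map_orth (Γ := Γ) hneg1orth hj1
    have e1 : (fun i => (-1 : Matrix (Fin d) (Fin d) ℝ) *ᵥ v i) = (fun i => -(v i)) := by
      funext i; rw [Matrix.neg_mulVec, Matrix.one_mulVec]
    have e2 : (fun i => (-1 : Matrix (Fin d) (Fin d) ℝ) *ᵥ ((-τ) *ᵥ v i))
        = (fun i => τ *ᵥ v i) := by
      funext i; rw [Matrix.mulVec_mulVec, neg_one_mul, neg_neg]
    rw [e1, e2] at hj2
    exact hneg.trans hj2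
  · have hd1 : d = 1 := by
      rcases hd with ⟨k, hk⟩; omega
    subst hd1
    have hτv : (fun i => τ *ᵥ v i) = (fun i => -(v i)) := by
      funext i; funext k
      have hk0 : k = 0 := Subsingleton.elim k 0
      subst hk0
      have hτ00 : τ 0 0 = -1 := by rw [← Matrix.det_fin_one τ]; exact hτdet
      simp [Matrix.mulVec, dotProduct, hτ00]
    rw [hτv]
    exact hneg

end Stmt14Aux11
theorem stmt14 {n d : ℕ} (Γ : Subgroup (Equiv.Perm (Fin n))) (hd : Odd d)
    (v : Fin n → Fin d → ℝ) (hv : v ∈ SdSet n d Γ)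
    (T : Γ → Matrix (Fin d) (Fin d) ℝ)
    (hT : IsRepOf Γ T v) (hTirr : IrredRep Γ T)
    (τ : Matrix (Fin d) (Fin d) ℝ) (hτ : τᵀ * τ = 1) (hτdet : τ.det = -1) :
    DeformEquiv Γ v (fun i => τ.mulVec (v i)) ↔ Flexible Γ v := by
  constructor
  · exact forward_dir hv hτdet
  · exact backward_dir hd hv hT hTirr hτ hτdet
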